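/- Let q ∈ ℂ with q ≠ 0 and qᵏ ≠ 1 for every integer k ≥ 1, let m ≥ 1, and let λ₁ ≥ λ₂ ≥ … ≥ λ_m ≥ 0 be integers. Set ℓ_i = λ_i − i and μ_i := q^{−2(λ_i − i + m)} for 1 ≤ i ≤ m (the μ_i are then pairwise distinct). Then for every n ≥ 1: Σ_{i=1}^{m} μ_iⁿ d_i(μ) = q^{−m(2n+1)} Σ_{i=1}^{m} q^{−2n ℓ_i} ∏_{j≠i} (ℓ_i − ℓ_j − 1)_q / (ℓ_i − ℓ_j)_q. -/

import Mathlib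

open Finset

lemma aux_zpow_ne_one (q : ℂ) (hq : q ≠ 0) (hqk : ∀ k : ℕ, 1 ≤ k → q ^ k ≠ 1)
    (k : ℤ) (hk : k ≠ 0) : q ^ k ≠ 1 := by
  rcases lt_or_gt_of_ne hk with h | h
  · intro he
    have he' : q ^ (-k) = 1 := by rw [zpow_neg, he, inv_one]
    have := hqk (-k).toNat (by omega)
    rw [← zpow_natCast, Int.toNat_of_nonneg (by omega)] at this
    exact this he'
  · intro he
    have := hqk k.toNat (by omega)
    rw [← zpow_natCast, Int.toNat_of_nonneg (by omega)] at this
    exact this he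

lemma aux_key (q : ℂ) (hq : q ≠ 0) (hqk : ∀ k : ℕ, 1 ≤ k → q ^ k ≠ 1)
    (m : ℕ) (a b : ℤ) (hab : a ≠ b) :
    (q ^ (-2*(a+(m:ℤ))) - q⁻¹ ^ 2 * q ^ (-2*(b+(m:ℤ)))) /
        (q ^ (-2*(a+(m:ℤ))) - q ^ (-2*(b+(m:ℤ))))
      = q⁻¹ * (((q ^ (a-b-1) - q ^ (-(a-b-1))) / (q - q⁻¹)) /
          ((q ^ (a-b) - q ^ (-(a-b))) / (q - q⁻¹))) := by
  have hx : q ^ a ≠ 0 := zpow_ne_zero a hq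
  have hy : q ^ b ≠ 0 := zpow_ne_zero b hq
  have hw : q ^ (m:ℤ) ≠ 0 := zpow_ne_zero _ hq
  have hqq : q - q⁻¹ ≠ 0 := by
    intro h
    apply hqk 2 (by norm_num)
    have h' : q = q⁻¹ := sub_eq_zero.mp h
    rw [pow_two]
    nth_rewrite 2 [h']
    exact mul_inv_cancel₀ hq
  have hd1 : q ^ (a-b) - q ^ (-(a-b)) ≠ 0 := by
    intro h
    apply aux_zpow_ne_one q hq hqk (2*(a-b)) (by omega)
    rw [show 2*(a-b) = (a-b) - (-(a-b)) by ring, zpow_sub₀ hq, sub_eq_zero.mp h,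
      div_self (zpow_ne_zero _ hq)]
  have hd2 : q ^ (-2*(a+(m:ℤ))) - q ^ (-2*(b+(m:ℤ))) ≠ 0 := by
    intro h
    apply aux_zpow_ne_one q hq hqk (-2*(a+(m:ℤ)) - (-2*(b+(m:ℤ)))) (by omega)
    rw [zpow_sub₀ hq, sub_eq_zero.mp h, div_self (zpow_ne_zero _ hq)]
  have e1 : ∀ c : ℤ, q ^ (-2*(c+(m:ℤ))) = ((q ^ c * q ^ (m:ℤ)) * (q ^ c * q ^ (m:ℤ)))⁻¹ := by
    intro c
    rw [show -2*(c+(m:ℤ)) = -((c+(m:ℤ)) + (c+(m:ℤ))) by ring, zpow_neg, zpow_add₀ hq,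
      zpow_add₀ hq]
  have e3 : q ^ (a-b) = q ^ a / q ^ b := zpow_sub₀ hq a b
  have e4 : q ^ (-(a-b)) = (q ^ a / q ^ b)⁻¹ := by rw [zpow_neg, e3]
  have e5 : q ^ (a-b-1) = q ^ a / q ^ b / q := by
    rw [zpow_sub₀ hq, zpow_sub₀ hq, zpow_one]
  have e6 : q ^ (-(a-b-1)) = (q ^ a / q ^ b / q)⁻¹ := by rw [zpow_neg, e5]
  rw [div_div_div_cancel_right₀ hqq, mul_div_assoc',
    div_eq_div_iff hd2 hd1, e1 a, e1 b, e3, e4, e5, e6]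
  generalize q ^ a = x at hx ⊢
  generalize q ^ b = y at hy ⊢
  generalize q ^ (m:ℤ) = w at hw ⊢
  field_simp
  ring

theorem stmt_17 (q : ℂ) (hq : q ≠ 0) (hqk : ∀ k : ℕ, 1 ≤ k → q ^ k ≠ 1)
    (m : ℕ) (hm : 1 ≤ m) (lam : Fin m → ℕ)
    (hlam : ∀ i j : Fin m, i ≤ j → lam j ≤ lam i)
    (ℓ : Fin m → ℤ) (hℓ : ∀ i : Fin m, ℓ i = (lam i : ℤ) - ((i : ℕ) + 1))
    (μ : Fin m → ℂ)
    (hμ : ∀ i : Fin m, μ i = q ^ (-2 * ((lam i : ℤ) - ((i : ℕ) + 1) + (m : ℤ))))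
    (d : Fin m → ℂ)
    (hd : ∀ i : Fin m,
      d i = q⁻¹ * ∏ j ∈ univ.erase i, (μ i - q⁻¹ ^ 2 * μ j) / (μ i - μ j))
    (qnum : ℤ → ℂ) (hqnum : ∀ a : ℤ, qnum a = (q ^ a - q ^ (-a)) / (q - q⁻¹)) :
    ∀ n : ℕ, 1 ≤ n →
      ∑ i, μ i ^ n * d i
        = q ^ (-(m : ℤ) * (2 * (n : ℤ) + 1)) *
            ∑ i, q ^ (-2 * (n : ℤ) * ℓ i) *
              ∏ j ∈ univ.erase i, qnum (ℓ i - ℓ j - 1) / qnum (ℓ i - ℓ j) := by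
  intro n hn
  have hμ' : ∀ i : Fin m, μ i = q ^ (-2 * (ℓ i + (m:ℤ))) := by
    intro i; rw [hμ i, ← hℓ i]
  have hkey : ∀ i j : Fin m, i < j → ℓ j < ℓ i := by
    intro i j h
    have h1 := hlam i j h.le
    have h2 : (i : ℕ) < (j : ℕ) := h
    rw [hℓ, hℓ]; omega
  have hℓne : ∀ i j : Fin m, i ≠ j → ℓ i ≠ ℓ j := by
    intro i j hij
    rcases lt_or_gt_of_ne hij with h | h
    · exact (hkey i j h).ne'
    · exact (hkey j i h).ne
  rw [Finset.mul_sum]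
  refine Finset.sum_congr rfl fun i _ => ?_
  have hprod : ∏ j ∈ univ.erase i, (μ i - q⁻¹ ^ 2 * μ j) / (μ i - μ j)
      = q⁻¹ ^ (m-1) *
        ∏ j ∈ univ.erase i, qnum (ℓ i - ℓ j - 1) / qnum (ℓ i - ℓ j) := by
    have hc : (univ.erase i).card = m - 1 := by
      rw [Finset.card_erase_of_mem (mem_univ i), card_univ, Fintype.card_fin]
    calc ∏ j ∈ univ.erase i, (μ i - q⁻¹ ^ 2 * μ j) / (μ i - μ j)
        = ∏ j ∈ univ.erase i, q⁻¹ * (qnum (ℓ i - ℓ j - 1) / qnum (ℓ i - ℓ j)) := by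
          refine Finset.prod_congr rfl fun j hj => ?_
          have hji : j ≠ i := Finset.ne_of_mem_erase hj
          have e := aux_key q hq hqk m (ℓ i) (ℓ j) (hℓne i j hji.symm)
          rw [hμ' i, hμ' j, hqnum, hqnum]
          exact e
      _ = q⁻¹ ^ (m-1) * ∏ j ∈ univ.erase i, qnum (ℓ i - ℓ j - 1) / qnum (ℓ i - ℓ j) := by
          rw [Finset.prod_mul_distrib, Finset.prod_const, hc]
  rw [hd i, hprod, hμ' i]
  have h1 : (q ^ (-2 * (ℓ i + (m:ℤ)))) ^ n = q ^ (-2 * (ℓ i + (m:ℤ)) * (n:ℤ)) := by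
    rw [← zpow_natCast (q ^ (-2 * (ℓ i + (m:ℤ)))) n, ← zpow_mul]
  have h3 : q⁻¹ ^ (m-1) = q ^ (-(((m:ℤ)) - 1)) := by
    rw [inv_pow, ← zpow_natCast, ← zpow_neg]
    congr 1
    omega
  have h2 : (q⁻¹ : ℂ) = q ^ (-1 : ℤ) := (zpow_neg_one q).symm
  rw [h1, h3, h2]
  set P := ∏ j ∈ univ.erase i, qnum (ℓ i - ℓ j - 1) / qnum (ℓ i - ℓ j) with hP
  calc q ^ (-2 * (ℓ i + (m:ℤ)) * (n:ℤ)) * (q ^ (-1:ℤ) * (q ^ (-((m:ℤ) - 1)) * P))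
      = q ^ (-2 * (ℓ i + (m:ℤ)) * (n:ℤ) + -1 + -((m:ℤ) - 1)) * P := by
        rw [zpow_add₀ hq, zpow_add₀ hq]; ring
    _ = q ^ (-(m:ℤ) * (2 * (n:ℤ) + 1) + -2 * (n:ℤ) * ℓ i) * P := by
        congr 1; ring
    _ = q ^ (-(m:ℤ) * (2 * (n:ℤ) + 1)) * (q ^ (-2 * (n:ℤ) * ℓ i) * P) := by
        rw [zpow_add₀ hq, mul_assoc]
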